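/- arXiv:1407.6076 — 3 statements merged into one kernel-verified Lean document; each statement's English description precedes it below -/
import Mathlib

section
/- If X is an n×n Metzler matrix (all off-diagonal entries nonnegative) and there exists a vector ξ with all entries strictly positive such that Xξ has all entries strictly negative, then X is Hurwitz, i.e., every eigenvalue of X has strictly negative real part. -/
open Matrix Set Filter

noncomputable def matSpec {n : ℕ} (X : Matrix (Fin n) (Fin n) ℝ) : Set ℂ :=
  spectrum ℂ (X.map (Complex.ofReal))

def IsMetzler {n : ℕ} (X : Matrix (Fin n) (Fin n) ℝ) : Prop :=
  ∀ i j, i ≠ j → 0 ≤ X i j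

def IsHurwitz {n : ℕ} (X : Matrix (Fin n) (Fin n) ℝ) : Prop :=
  ∀ z ∈ matSpec X, z.re < 0

def MatIrreducible {n : ℕ} (X : Matrix (Fin n) (Fin n) ℝ) : Prop :=
  ∀ S : Finset (Fin n), S.Nonempty → S ≠ Finset.univ → ∃ i ∈ S, ∃ j ∉ S, X i j ≠ 0

noncomputable def spectralAbscissa {n : ℕ} (X : Matrix (Fin n) (Fin n) ℝ) : ℝ :=
  sSup (Complex.re '' matSpec X)

noncomputable def spectralRadiusR {n : ℕ} (X : Matrix (Fin n) (Fin n) ℝ) : ℝ :=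
  sSup ((fun z : ℂ => ‖z‖) '' matSpec X)

theorem stmt0 {n : ℕ} (X : Matrix (Fin n) (Fin n) ℝ) (hM : IsMetzler X)
    (ξ : Fin n → ℝ) (hξ : ∀ i, 0 < ξ i) (hXξ : ∀ i, (X *ᵥ ξ) i < 0) :
    IsHurwitz X := by
  intro z hz
  set A := X.map (Complex.ofReal) with hA
  have hz' : Module.End.HasEigenvalue (Matrix.toLin' A) z := by
    rw [Module.End.hasEigenvalue_iff_mem_spectrum]
    rwa [show Matrix.toLin' A = Matrix.toLinAlgEquiv (Pi.basisFun ℂ (Fin n)) A from rfl,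
      AlgEquiv.spectrum_eq]
  obtain ⟨v, hv⟩ := hz'.exists_hasEigenvector
  have heq : A *ᵥ v = z • v := by
    have := Module.End.mem_eigenspace_iff.mp hv.1
    simpa [Matrix.toLin'_apply] using this
  have hn : (Finset.univ : Finset (Fin n)).Nonempty := by
    rcases Nat.eq_zero_or_pos n with rfl | h
    · exact absurd (Subsingleton.elim v 0) hv.2
    · exact ⟨⟨0, h⟩, Finset.mem_univ _⟩
  obtain ⟨i, -, hi⟩ := Finset.exists_max_image Finset.univ
    (fun j => ‖v j‖ / ξ j) hn
  set c : ℝ := ‖v i‖ / ξ i with hc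
  have hcb : ∀ j, ‖v j‖ ≤ c * ξ j := by
    intro j
    have := hi j (Finset.mem_univ j)
    calc ‖v j‖ = ‖v j‖ / ξ j * ξ j := by
          rw [div_mul_cancel₀ _ (hξ j).ne']
      _ ≤ c * ξ j := by exact mul_le_mul_of_nonneg_right this (hξ j).le
  have hcpos : 0 < c := by
    obtain ⟨j, hj⟩ : ∃ j, v j ≠ 0 := by
      by_contra h
      push_neg at h
      exact hv.2 (funext h)
    have : 0 < ‖v j‖ / ξ j :=
      div_pos (by simpa using hj) (hξ j)
    exact this.trans_le (hi j (Finset.mem_univ j))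
  have hvi : ‖v i‖ = c * ξ i := by
    rw [hc, div_mul_cancel₀ _ (hξ i).ne']
  have hvipos : 0 < ‖v i‖ := by
    rw [hvi]; exact mul_pos hcpos (hξ i)
  -- row i equation
  have hrow : (z - (X i i : ℂ)) * v i = ∑ j ∈ Finset.univ.erase i, (X i j : ℂ) * v j := by
    have h1 : ∑ j, (X i j : ℂ) * v j = z * v i := by
      have := congrFun heq i
      simpa [Matrix.mulVec, dotProduct, hA, Matrix.map_apply] using this
    have h2 : ∑ j, (X i j : ℂ) * v j
        = (X i i : ℂ) * v i + ∑ j ∈ Finset.univ.erase i, (X i j : ℂ) * v j := by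
      rw [← Finset.add_sum_erase _ _ (Finset.mem_univ i)]
    rw [sub_mul]
    rw [h2] at h1
    linear_combination -h1
  have hsum : ∑ j ∈ Finset.univ.erase i, X i j * ξ j < -X i i * ξ i := by
    have := hXξ i
    rw [Matrix.mulVec, dotProduct] at this
    have h2 : ∑ j, X i j * ξ j
        = X i i * ξ i + ∑ j ∈ Finset.univ.erase i, X i j * ξ j := by
      rw [← Finset.add_sum_erase _ _ (Finset.mem_univ i)]
    rw [h2] at this
    linarith
  have key : ‖z - (X i i : ℂ)‖ * ‖v i‖ < -X i i * ‖v i‖ := by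
    calc ‖z - (X i i : ℂ)‖ * ‖v i‖
        = ‖(z - (X i i : ℂ)) * v i‖ := (norm_mul _ _).symm
      _ = ‖∑ j ∈ Finset.univ.erase i, (X i j : ℂ) * v j‖ := by rw [hrow]
      _ ≤ ∑ j ∈ Finset.univ.erase i, ‖(X i j : ℂ) * v j‖ :=
          norm_sum_le _ _
      _ ≤ ∑ j ∈ Finset.univ.erase i, X i j * (c * ξ j) := by
          apply Finset.sum_le_sum
          intro j hj
          rw [norm_mul]
          have hXij : 0 ≤ X i j := hM i j (Finset.ne_of_mem_erase hj).symm
          rw [Complex.norm_real, Real.norm_eq_abs, abs_of_nonneg hXij]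
          exact mul_le_mul_of_nonneg_left (hcb j) hXij
      _ = c * ∑ j ∈ Finset.univ.erase i, X i j * ξ j := by
          rw [Finset.mul_sum]; apply Finset.sum_congr rfl; intros; ring
      _ < c * (-X i i * ξ i) := by
          exact mul_lt_mul_of_pos_left hsum hcpos
      _ = -X i i * ‖v i‖ := by rw [hvi]; ring
  have h3 : ‖z - (X i i : ℂ)‖ < -X i i :=
    lt_of_mul_lt_mul_right (by exact key) hvipos.le
  have h4 : z.re - X i i ≤ ‖z - (X i i : ℂ)‖ := by
    have := Complex.re_le_norm (z - (X i i : ℂ))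
    simpa using this
  linarith
end

section
/- Let X be an n×n irreducible Metzler matrix whose spectral abscissa μ(X) = max{Re(λ) : λ ∈ σ(X)} equals 0. Then there exists a positive diagonal matrix R such that Xᵀ R + R X is negative semidefinite. -/
open Matrix Set Filter
open Topology

lemma spec_iff_eig {n : ℕ} (M : Matrix (Fin n) (Fin n) ℂ) (z : ℂ) :
    z ∈ spectrum ℂ M ↔ ∃ u : Fin n → ℂ, u ≠ 0 ∧ M *ᵥ u = z • u := by
  rw [spectrum.mem_iff, Algebra.algebraMap_eq_smul_one, Matrix.isUnit_iff_isUnit_det,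
    isUnit_iff_ne_zero, not_ne_iff, ← Matrix.exists_mulVec_eq_zero_iff]
  constructor
  · rintro ⟨u, hu, h2⟩
    rw [Matrix.sub_mulVec, Matrix.smul_mulVec, Matrix.one_mulVec, sub_eq_zero] at h2
    exact ⟨u, hu, h2.symm⟩
  · rintro ⟨u, hu, h2⟩
    refine ⟨u, hu, ?_⟩
    rw [Matrix.sub_mulVec, Matrix.smul_mulVec, Matrix.one_mulVec, h2, sub_self]

lemma spec_finite {n : ℕ} (M : Matrix (Fin n) (Fin n) ℂ) : (spectrum ℂ M).Finite := by
  set f := (Matrix.toLinAlgEquiv (Pi.basisFun ℂ (Fin n))) M with hf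
  have heq : spectrum ℂ M = spectrum ℂ f :=
    (AlgEquiv.spectrum_eq (Matrix.toLinAlgEquiv (Pi.basisFun ℂ (Fin n))) M).symm
  rw [heq]
  have hne : minpoly ℂ f ≠ 0 :=
    minpoly.ne_zero (Algebra.IsIntegral.isIntegral (R := ℂ) f)
  refine Set.Finite.subset (Polynomial.finite_setOf_isRoot hne) ?_
  intro z hz
  have : Module.End.HasEigenvalue f z := Module.End.HasEigenvalue.of_mem_spectrum hz
  exact Module.End.hasEigenvalue_iff_isRoot.mp this

lemma mulVec_nonneg {n : ℕ} {B : Matrix (Fin n) (Fin n) ℝ} (hB0 : ∀ i j, 0 ≤ B i j)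
    {y : Fin n → ℝ} (hy : ∀ i, 0 ≤ y i) : ∀ i, 0 ≤ (B *ᵥ y) i := by
  intro i
  simp only [Matrix.mulVec, dotProduct]
  exact Finset.sum_nonneg fun j _ => mul_nonneg (hB0 i j) (hy j)

lemma posvec {n : ℕ} (B : Matrix (Fin n) (Fin n) ℝ) (hB0 : ∀ i j, 0 ≤ B i j)
    (hBd : ∀ i, 0 < B i i)
    (hcut : ∀ S : Finset (Fin n), S.Nonempty → S ≠ Finset.univ → ∃ i ∉ S, ∃ j ∈ S, B i j ≠ 0)
    (y : Fin n → ℝ) (hy : ∀ i, 0 ≤ y i) (hy0 : y ≠ 0) :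
    ∀ i, 0 < ((B ^ (n - 1)) *ᵥ y) i := by
  classical
  set supp : (Fin n → ℝ) → Finset (Fin n) := fun z => Finset.univ.filter (fun i => z i ≠ 0)
    with hsupp
  -- step facts
  have step : ∀ z : Fin n → ℝ, (∀ i, 0 ≤ z i) →
      (supp z ⊆ supp (B *ᵥ z)) ∧
      ((supp z).Nonempty → supp z ≠ Finset.univ → supp z ⊂ supp (B *ᵥ z)) := by
    intro z hz
    have hpos : ∀ i j, z j ≠ 0 → B i j ≠ 0 → (B *ᵥ z) i ≠ 0 := by
      intro i j hzj hBij
      have hzj' : 0 < z j := lt_of_le_of_ne (hz j) (Ne.symm hzj)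
      have hBij' : 0 < B i j := lt_of_le_of_ne (hB0 i j) (Ne.symm hBij)
      have : 0 < (B *ᵥ z) i := by
        have : B i j * z j ≤ (B *ᵥ z) i := by
          apply Finset.single_le_sum (f := fun j => B i j * z j)
            (fun k _ => mul_nonneg (hB0 i k) (hz k)) (Finset.mem_univ j)
        nlinarith
      exact ne_of_gt this
    have hsub : supp z ⊆ supp (B *ᵥ z) := by
      intro i hi
      simp only [hsupp, Finset.mem_filter, Finset.mem_univ, true_and] at hi ⊢
      exact hpos i i hi (ne_of_gt (hBd i))
    refine ⟨hsub, fun hne hnuniv => ?_⟩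
    obtain ⟨i, hiS, j, hjS, hBij⟩ := hcut (supp z) hne hnuniv
    refine Finset.ssubset_iff_of_subset hsub |>.mpr ⟨i, ?_, hiS⟩
    simp only [hsupp, Finset.mem_filter, Finset.mem_univ, true_and] at hjS ⊢
    exact hpos i j hjS hBij
  -- induction
  have main : ∀ k : ℕ, (∀ i, 0 ≤ ((B ^ k) *ᵥ y) i) ∧
      min n ((supp y).card + k) ≤ (supp ((B ^ k) *ᵥ y)).card := by
    intro k
    induction k with
    | zero =>
      constructor
      · intro i; simpa using hy i
      · simp only [pow_zero, Matrix.one_mulVec]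
        exact le_trans (min_le_right _ _) (by simp)
    | succ k ih =>
      obtain ⟨ih1, ih2⟩ := ih
      have hrw : (B ^ (k+1)) *ᵥ y = B *ᵥ ((B ^ k) *ᵥ y) := by
        rw [Matrix.mulVec_mulVec, ← pow_succ']
      constructor
      · rw [hrw]; exact mulVec_nonneg hB0 ih1
      · rw [hrw]
        set z := (B ^ k) *ᵥ y with hz
        obtain ⟨hsub, hstrict⟩ := step z ih1
        by_cases hzuniv : supp z = Finset.univ
        · have : supp (B *ᵥ z) = Finset.univ :=
            Finset.eq_univ_of_forall fun i => hsub (hzuniv ▸ Finset.mem_univ i)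
          rw [this]
          simp [Finset.card_univ]
        · by_cases hzne : (supp z).Nonempty
          · have h1 : (supp z).card < (supp (B *ᵥ z)).card :=
              Finset.card_lt_card (hstrict hzne hzuniv)
            have h2 : (supp z).card < n := by
              have := Finset.card_lt_card (Finset.ssubset_univ_iff.mpr hzuniv)
              simpa using this
            have h3 := ih2
            have h4 : n ⊓ ((supp y).card + k) = (supp y).card + k := by omega
            omega
          · -- supp z empty; then min n (card + k) = 0? not necessarily... derive card supp y + k ≤ 0 via ih2
            rw [Finset.not_nonempty_iff_eq_empty] at hzne
            rw [hzne, Finset.card_empty] at ih2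
            have hsy : 0 < (supp y).card := by
              obtain ⟨i, hi⟩ := Function.ne_iff.mp hy0
              refine Finset.card_pos.mpr ⟨i, ?_⟩
              simp only [hsupp, Finset.mem_filter, Finset.mem_univ, true_and]
              simpa using hi
            omega
  intro i
  have hn : 0 < n := i.pos
  obtain ⟨h1, h2⟩ := main (n - 1)
  have hsy : 0 < (supp y).card := by
    obtain ⟨j, hj⟩ := Function.ne_iff.mp hy0
    refine Finset.card_pos.mpr ⟨j, ?_⟩
    simp only [hsupp, Finset.mem_filter, Finset.mem_univ, true_and]
    simpa using hj
  have hcard : (supp ((B ^ (n-1)) *ᵥ y)).card = n := by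
    have hle : (supp ((B ^ (n-1)) *ᵥ y)).card ≤ n := by
      have := Finset.card_le_univ (supp ((B ^ (n-1)) *ᵥ y))
      simpa using this
    omega
  have huniv : supp ((B ^ (n-1)) *ᵥ y) = Finset.univ := by
    apply Finset.eq_univ_of_card
    simpa using hcard
  have : i ∈ supp ((B ^ (n-1)) *ᵥ y) := huniv ▸ Finset.mem_univ i
  simp only [hsupp, Finset.mem_filter, Finset.mem_univ, true_and] at this
  exact lt_of_le_of_ne (h1 i) (Ne.symm this)

attribute [local instance] Matrix.linftyOpNormedAddCommGroup Matrix.linftyOpNormedSpace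
  Matrix.linftyOpNormedRing Matrix.linftyOpNormedAlgebra

lemma mulVec_mono {n : ℕ} {A : Matrix (Fin n) (Fin n) ℝ} (hA : ∀ i j, 0 ≤ A i j)
    {x y : Fin n → ℝ} (hxy : ∀ i, x i ≤ y i) : ∀ i, (A *ᵥ x) i ≤ (A *ᵥ y) i := by
  intro i
  simp only [Matrix.mulVec, dotProduct]
  exact Finset.sum_le_sum fun j _ => mul_le_mul_of_nonneg_left (hxy j) (hA i j)

lemma cw_lower {n : ℕ} (hn : 0 < n) (A : Matrix (Fin n) (Fin n) ℝ) (hA : ∀ i j, 0 ≤ A i j)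
    (w : Fin n → ℝ) (hw : ∀ i, 0 < w i) (θ : ℝ) (hθ : 0 ≤ θ)
    (h : ∀ i, θ * w i ≤ (A *ᵥ w) i) :
    ∃ z ∈ spectrum ℂ (A.map Complex.ofReal), θ ≤ ‖z‖ := by
  haveI : Nonempty (Fin n) := ⟨⟨0, hn⟩⟩
  set i0 : Fin n := ⟨0, hn⟩
  -- power inequality
  have hpow : ∀ k : ℕ, ∀ i, θ ^ k * w i ≤ ((A ^ k) *ᵥ w) i := by
    intro k
    induction k with
    | zero => intro i; simp [Matrix.one_mulVec]
    | succ k ih =>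
      intro i
      have h1 : (A ^ (k+1)) *ᵥ w = A *ᵥ ((A ^ k) *ᵥ w) := by
        rw [Matrix.mulVec_mulVec, ← pow_succ']
      rw [h1]
      have h2 : ∀ j, (θ ^ k * w j) ≤ ((A ^ k) *ᵥ w) j := ih
      have h3 : (A *ᵥ (fun j => θ ^ k * w j)) i ≤ (A *ᵥ ((A ^ k) *ᵥ w)) i :=
        mulVec_mono hA h2 i
      have h4 : (A *ᵥ (fun j => θ ^ k * w j)) i = θ ^ k * (A *ᵥ w) i := by
        simp only [Matrix.mulVec, dotProduct, Finset.mul_sum]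
        exact Finset.sum_congr rfl fun j _ => by ring
      have h5 : θ ^ (k+1) * w i ≤ θ ^ k * (A *ᵥ w) i := by
        have := h i
        have hk : (0:ℝ) ≤ θ ^ k := pow_nonneg hθ k
        calc θ ^ (k+1) * w i = θ ^ k * (θ * w i) := by ring
        _ ≤ θ ^ k * (A *ᵥ w) i := by nlinarith
      linarith
  -- complex matrix
  set Ac : Matrix (Fin n) (Fin n) ℂ := A.map Complex.ofReal with hAc
  have hmap : ∀ k : ℕ, Ac ^ k = (A ^ k).map Complex.ofReal := by
    intro k
    have : Ac = (Complex.ofRealHom.mapMatrix : Matrix (Fin n) (Fin n) ℝ →+* _) A := rfl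
    rw [this, ← map_pow]
    rfl
  set wc : Fin n → ℂ := fun i => (w i : ℂ) with hwc
  have hwc0 : wc ≠ 0 := by
    intro hcon
    have := congrFun hcon i0
    simp only [hwc, Pi.zero_apply, Complex.ofReal_eq_zero] at this
    exact (hw i0).ne' this
  have hwcpos : 0 < ‖wc‖ := norm_pos_iff.mpr hwc0
  have hnorm : ∀ k : ℕ, θ ^ k * w i0 ≤ ‖Ac ^ k‖ * ‖wc‖ := by
    intro k
    have h1 : (Ac ^ k) *ᵥ wc = fun i => (((A ^ k) *ᵥ w) i : ℂ) := by
      funext i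
      rw [hmap]
      simp [Matrix.mulVec, dotProduct, hwc]
    have h3 : ‖(Ac ^ k) *ᵥ wc‖ ≤ ‖Ac ^ k‖ * ‖wc‖ := Matrix.linfty_opNorm_mulVec _ _
    have h4 : θ ^ k * w i0 ≤ |((A ^ k) *ᵥ w) i0| := (hpow k i0).trans (le_abs_self _)
    have h2 : |((A ^ k) *ᵥ w) i0| ≤ ‖(Ac ^ k) *ᵥ wc‖ := by
      have := norm_le_pi_norm ((Ac ^ k) *ᵥ wc) i0
      rw [congrFun h1 i0] at this
      simpa using this
    linarith
  -- Gelfand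
  set m : ℝ := w i0 / ‖wc‖ with hm
  have hmpos : 0 < m := div_pos (hw i0) hwcpos
  have hlow : ∀ k : ℕ, θ ^ k * m ≤ ‖Ac ^ k‖ := by
    intro k
    rw [hm, ← mul_div_assoc, div_le_iff₀ hwcpos]
    exact hnorm k
  have htend := spectrum.pow_norm_pow_one_div_tendsto_nhds_spectralRadius Ac
  have htend2 : Tendsto (fun k : ℕ => ENNReal.ofReal (θ * m ^ ((1:ℝ)/k)))
      atTop (𝓝 (ENNReal.ofReal θ)) := by
    have hm1 : Tendsto (fun k : ℕ => ((1:ℝ)/k)) atTop (𝓝 0) := tendsto_one_div_atTop_nhds_zero_nat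
    have hm2 : Tendsto (fun k : ℕ => m ^ ((1:ℝ)/k)) atTop (𝓝 1) := by
      have := (tendsto_const_nhds : Tendsto (fun _ : ℕ => m) atTop (𝓝 m)).rpow hm1
        (Or.inl hmpos.ne')
      simpa using this
    have hm3 : Tendsto (fun k : ℕ => θ * m ^ ((1:ℝ)/k)) atTop (𝓝 θ) := by
      simpa using hm2.const_mul θ
    exact (ENNReal.continuous_ofReal.tendsto θ).comp hm3
  have hineq : ∀ᶠ k : ℕ in atTop, ENNReal.ofReal (θ * m ^ ((1:ℝ)/k)) ≤
      ENNReal.ofReal (‖Ac ^ k‖ ^ ((1:ℝ)/k)) := by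
    filter_upwards [Filter.eventually_ge_atTop 1] with k hk
    apply ENNReal.ofReal_le_ofReal
    have hk0 : (k:ℝ) ≠ 0 := by positivity
    have e1 : (θ ^ k * m) ^ ((1:ℝ)/k) = θ * m ^ ((1:ℝ)/k) := by
      rw [Real.mul_rpow (pow_nonneg hθ k) hmpos.le]
      congr 1
      rw [← Real.rpow_natCast θ k, ← Real.rpow_mul hθ]
      rw [mul_one_div, div_self hk0, Real.rpow_one]
    rw [← e1]
    exact Real.rpow_le_rpow (mul_nonneg (pow_nonneg hθ k) hmpos.le) (hlow k)
      (by positivity)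
  have hfinal : ENNReal.ofReal θ ≤ spectralRadius ℂ Ac :=
    le_of_tendsto_of_tendsto htend2 htend hineq
  obtain ⟨z, hz, hznorm⟩ := spectrum.exists_nnnorm_eq_spectralRadius Ac
  refine ⟨z, hz, ?_⟩
  rw [← hznorm] at hfinal
  have h6 := ENNReal.toReal_mono ENNReal.coe_ne_top hfinal
  rw [ENNReal.toReal_ofReal hθ] at h6
  simp only [ENNReal.coe_toReal, coe_nnnorm] at h6
  exact h6

lemma shift_map {n : ℕ} (M : Matrix (Fin n) (Fin n) ℝ) (c : ℝ) :
    (M + c • (1 : Matrix (Fin n) (Fin n) ℝ)).map Complex.ofReal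
      = M.map Complex.ofReal + (c : ℂ) • (1 : Matrix (Fin n) (Fin n) ℂ) := by
  ext i j
  simp only [Matrix.map_apply, Matrix.add_apply, Matrix.smul_apply, Matrix.one_apply,
    smul_eq_mul, Complex.ofReal_add, Complex.ofReal_mul]
  by_cases h : i = j <;> simp [h]

lemma spec_shift {n : ℕ} (M : Matrix (Fin n) (Fin n) ℝ) (c : ℝ) (z : ℂ)
    (hz : z ∈ spectrum ℂ ((M + c • (1:Matrix (Fin n) (Fin n) ℝ)).map Complex.ofReal)) :
    z - c ∈ matSpec M := by
  rw [shift_map] at hz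
  rw [spec_iff_eig] at hz
  obtain ⟨u, hu, heig⟩ := hz
  rw [Matrix.add_mulVec, Matrix.smul_mulVec, Matrix.one_mulVec] at heig
  rw [matSpec, spec_iff_eig]
  refine ⟨u, hu, ?_⟩
  have : M.map Complex.ofReal *ᵥ u = z • u - (c:ℂ) • u := by
    rw [← heig]; abel
  rw [this, sub_smul]

set_option maxHeartbeats 2000000 in
lemma perron {n : ℕ} (hn : 0 < n) (X : Matrix (Fin n) (Fin n) ℝ) (hM : IsMetzler X)
    (hI : MatIrreducible X) (hub : ∀ z ∈ matSpec X, z.re ≤ 0)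
    (hzero : ∃ z₀ ∈ matSpec X, z₀.re = 0) :
    ∃ v : Fin n → ℝ, (∀ i, 0 < v i) ∧ X *ᵥ v = 0 := by
  haveI : Nonempty (Fin n) := ⟨⟨0, hn⟩⟩
  obtain ⟨z₀, hz₀mem, hz₀re⟩ := hzero
  rw [matSpec, spec_iff_eig] at hz₀mem
  obtain ⟨u, hu0, huei⟩ := hz₀mem
  -- the shift constant
  set c₀ : ℝ := 1 + ∑ i, |X i i| with hc₀def
  have hc₀diag : ∀ i, 0 < X i i + c₀ := by
    intro i
    have h1 : |X i i| ≤ ∑ j, |X j j| :=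
      Finset.single_le_sum (f := fun j => |X j j|) (fun j _ => abs_nonneg _) (Finset.mem_univ i)
    have := neg_abs_le (X i i)
    simp only [hc₀def]; linarith
  have hc₀pos : 0 < c₀ := by
    have : (0:ℝ) ≤ ∑ i, |X i i| := Finset.sum_nonneg fun i _ => abs_nonneg _
    simp only [hc₀def]; linarith
  set A₀ : Matrix (Fin n) (Fin n) ℝ := X + c₀ • 1 with hA₀def
  have hA₀ : ∀ i j, 0 ≤ A₀ i j := by
    intro i j
    by_cases h : i = j
    · subst h
      simp only [hA₀def, Matrix.add_apply, Matrix.smul_apply, Matrix.one_apply_eq, smul_eq_mul,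
        mul_one]
      exact (hc₀diag i).le
    · simp only [hA₀def, Matrix.add_apply, Matrix.smul_apply, Matrix.one_apply_ne h, smul_eq_mul,
        mul_zero, add_zero]
      exact hM i j h
  have hA₀off : ∀ i j, i ≠ j → A₀ i j = X i j := by
    intro i j h
    simp [hA₀def, Matrix.one_apply_ne h]
  -- y = |u|
  set y : Fin n → ℝ := fun i => ‖u i‖ with hydef
  have hy : ∀ i, 0 ≤ y i := fun i => norm_nonneg _
  have hy0 : y ≠ 0 := by
    intro hcon
    apply hu0
    funext i
    have := congrFun hcon i
    simpa [hydef] using this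
  -- |u| is superinvariant: c₀ • y ≤ A₀ *ᵥ y
  have habs : ∀ i, c₀ * y i ≤ (A₀ *ᵥ y) i := by
    intro i
    have heigA : (A₀.map Complex.ofReal) *ᵥ u = (z₀ + c₀) • u := by
      rw [hA₀def, shift_map, Matrix.add_mulVec, huei, Matrix.smul_mulVec,
        Matrix.one_mulVec, add_smul]
    have h1 : ‖(z₀ + c₀) * u i‖ ≤ (A₀ *ᵥ y) i := by
      have h2 : ((A₀.map Complex.ofReal) *ᵥ u) i = ∑ j, (A₀ i j : ℂ) * u j := by
        simp [Matrix.mulVec, dotProduct, Matrix.map_apply]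
      have h3 : (z₀ + c₀) * u i = ∑ j, (A₀ i j : ℂ) * u j := by
        rw [← h2, heigA]; simp [smul_eq_mul]
      rw [h3]
      refine (norm_sum_le _ _).trans ?_
      apply le_of_eq
      simp only [Matrix.mulVec, dotProduct, hydef]
      refine Finset.sum_congr rfl fun j _ => ?_
      rw [norm_mul]
      congr 1
      exact Complex.norm_of_nonneg (hA₀ i j)
    have h4 : c₀ * y i ≤ ‖(z₀ + c₀) * u i‖ := by
      rw [norm_mul]
      have h5 : c₀ ≤ ‖z₀ + c₀‖ := by
        have := Complex.re_le_norm (z₀ + c₀)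
        simp only [Complex.add_re, Complex.ofReal_re, hz₀re, zero_add] at this
        exact this
      have := hy i
      have : (0:ℝ) ≤ ‖u i‖ := norm_nonneg _
      nlinarith [norm_nonneg (u i)]
    linarith
  have hA₀y : A₀ *ᵥ y = X *ᵥ y + c₀ • y := by
    rw [hA₀def, Matrix.add_mulVec, Matrix.smul_mulVec, Matrix.one_mulVec]
  have hXy : ∀ i, 0 ≤ (X *ᵥ y) i := by
    intro i
    have := habs i
    rw [hA₀y] at this
    simp only [Pi.add_apply, Pi.smul_apply, smul_eq_mul] at this
    linarith
  -- the positivity matrix B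
  set B : Matrix (Fin n) (Fin n) ℝ := 1 + A₀ with hBdef
  have hB0 : ∀ i j, 0 ≤ B i j := by
    intro i j
    by_cases h : i = j
    · subst h
      simp only [hBdef, Matrix.add_apply, Matrix.one_apply_eq]
      have := hA₀ i i; linarith
    · simp only [hBdef, Matrix.add_apply, Matrix.one_apply_ne h, zero_add]
      exact hA₀ i j
  have hBd : ∀ i, 0 < B i i := by
    intro i
    simp only [hBdef, Matrix.add_apply, Matrix.one_apply_eq]
    have := hA₀ i i; linarith
  have hcut : ∀ S : Finset (Fin n), S.Nonempty → S ≠ Finset.univ →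
      ∃ i ∉ S, ∃ j ∈ S, B i j ≠ 0 := by
    intro S hSne hSuniv
    have h1 : Sᶜ.Nonempty := by
      rw [Finset.nonempty_iff_ne_empty]
      intro hcon
      exact hSuniv ((Finset.compl_eq_empty_iff S).mp hcon)
    have h2 : Sᶜ ≠ Finset.univ := by
      intro hcon
      obtain ⟨x, hx⟩ := hSne
      have : x ∈ Sᶜ := hcon ▸ Finset.mem_univ x
      rw [Finset.mem_compl] at this
      exact this hx
    obtain ⟨i, hi, j, hj, hXij⟩ := hI Sᶜ h1 h2
    rw [Finset.mem_compl] at hi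
    rw [Finset.mem_compl, not_not] at hj
    have hij : i ≠ j := fun hcon => hi (hcon ▸ hj)
    refine ⟨i, hi, j, hj, ?_⟩
    have : B i j = X i j := by
      simp [hBdef, Matrix.add_apply, Matrix.one_apply_ne hij, hA₀off i j hij]
    rw [this]; exact hXij
  set w : Fin n → ℝ := (B ^ (n-1)) *ᵥ y with hwdef
  have hwpos : ∀ i, 0 < w i := posvec B hB0 hBd hcut y hy hy0
  set d : Fin n → ℝ := X *ᵥ y with hddef
  have hcommB : Commute X (B ^ (n-1)) := by
    have h1 : Commute X B := by
      apply Commute.add_right (Commute.one_right X)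
      apply Commute.add_right (Commute.refl X)
      exact (Commute.one_right X).smul_right c₀
    exact h1.pow_right (n-1)
  have hXw : X *ᵥ w = (B ^ (n-1)) *ᵥ d := by
    rw [hwdef, hddef, Matrix.mulVec_mulVec, Matrix.mulVec_mulVec, hcommB.eq]
  by_cases hd0 : d = 0
  · exact ⟨w, hwpos, by rw [hXw, hd0, Matrix.mulVec_zero]⟩
  · set e : Fin n → ℝ := (B ^ (n-1)) *ᵥ d with hedef
    have hepos : ∀ i, 0 < e i := posvec B hB0 hBd hcut d hXy hd0
    set ε : ℝ := Finset.univ.inf' Finset.univ_nonempty (fun i => e i / w i) with hεdef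
    have hε : 0 < ε := by
      rw [hεdef, Finset.lt_inf'_iff]
      exact fun i _ => div_pos (hepos i) (hwpos i)
    have hεw : ∀ i, ε * w i ≤ e i := by
      intro i
      have h1 : ε ≤ e i / w i := Finset.inf'_le _ (Finset.mem_univ i)
      rwa [le_div_iff₀ (hwpos i), ] at h1
    set K : ℝ := ‖X.map Complex.ofReal‖ with hKdef
    have hK0 : 0 ≤ K := norm_nonneg _
    set c : ℝ := c₀ + K + K^2/(2*ε) with hcdef
    have hcc₀ : c₀ ≤ c := by
      have : 0 ≤ K^2/(2*ε) := by positivity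
      simp only [hcdef]; linarith
    have hcK : K ≤ c := by
      have : 0 ≤ K^2/(2*ε) := by positivity
      simp only [hcdef]; linarith
    have h2ce : K^2 < 2*c*ε := by
      have h1 : K^2/(2*ε) * (2*ε) = K^2 := by field_simp
      have h2 : 2*c*ε = 2*c₀*ε + 2*K*ε + K^2 := by
        simp only [hcdef]; field_simp
      nlinarith
    set A : Matrix (Fin n) (Fin n) ℝ := X + c • 1 with hAdef
    have hA : ∀ i j, 0 ≤ A i j := by
      intro i j
      by_cases h : i = j
      · subst h
        simp only [hAdef, Matrix.add_apply, Matrix.smul_apply, Matrix.one_apply_eq, smul_eq_mul,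
          mul_one]
        have := hc₀diag i; linarith
      · simp only [hAdef, Matrix.add_apply, Matrix.smul_apply, Matrix.one_apply_ne h, smul_eq_mul,
          mul_zero, add_zero]
        exact hM i j h
    set θ : ℝ := c + ε with hθdef
    have hθ : 0 ≤ θ := by
      simp only [hθdef]
      have : 0 ≤ K^2/(2*ε) := by positivity
      simp only [hcdef]; linarith
    have hθw : ∀ i, θ * w i ≤ (A *ᵥ w) i := by
      intro i
      have h1 : (A *ᵥ w) i = (X *ᵥ w) i + c * w i := by
        rw [hAdef, Matrix.add_mulVec, Matrix.smul_mulVec, Matrix.one_mulVec]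
        simp
      rw [h1, hXw]
      have := hεw i
      simp only [hθdef]
      linarith
    obtain ⟨z, hzmem, hzabs⟩ := cw_lower hn A hA w hwpos θ hθ hθw
    exfalso
    clear_value θ c K ε e w d y A A₀ B
    have hz' : z - c ∈ matSpec X := spec_shift X c z (by rwa [← hAdef])
    have hre : (z - c).re ≤ 0 := hub _ hz'
    have habsK : ‖z - c‖ ≤ K := by
      have h1 : ‖z - c‖ ≤ ‖X.map Complex.ofReal‖ := spectrum.norm_le_norm_of_mem hz'
      rw [hKdef]
      exact h1
    -- contradiction
    have ha1 : -K ≤ (z - c).re := by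
      have h1 := Complex.abs_re_le_norm (z - c)
      have h2 := neg_abs_le (z - c).re
      linarith
    have hb1 : |(z - c).im| ≤ K := (Complex.abs_im_le_norm (z-c)).trans habsK
    have hsq : ‖z‖^2 = z.re^2 + z.im^2 := by
      rw [Complex.sq_norm, Complex.normSq_apply]; ring
    have hzre : z.re = (z - c).re + c := by simp
    have hzim : z.im = (z - c).im := by simp
    have habs2 : ‖z‖^2 ≤ c^2 + K^2 := by
      rw [hsq, hzre, hzim]
      have h3 : ((z - c).re + c)^2 ≤ c^2 := by nlinarith
      have h4 : (z - c).im^2 ≤ K^2 := by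
        have h5 : |(z - c).im|^2 ≤ K^2 := pow_le_pow_left₀ (abs_nonneg _) hb1 2
        rwa [sq_abs] at h5
      linarith
    have hθz : θ^2 ≤ ‖z‖^2 := by
      have h0 : 0 ≤ ‖z‖ := norm_nonneg z
      nlinarith
    simp only [hθdef] at hθz
    nlinarith

lemma matSpec_transpose {n : ℕ} (X : Matrix (Fin n) (Fin n) ℝ) : matSpec Xᵀ = matSpec X := by
  have hmapT : (Xᵀ).map Complex.ofReal = (X.map Complex.ofReal)ᵀ := by
    ext i j; simp [Matrix.transpose_apply, Matrix.map_apply]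
  ext z
  simp only [matSpec, hmapT]
  rw [spectrum.mem_iff, spectrum.mem_iff]
  have key : ∀ N : Matrix (Fin n) (Fin n) ℂ, IsUnit Nᵀ ↔ IsUnit N := by
    intro N
    rw [Matrix.isUnit_iff_isUnit_det, Matrix.isUnit_iff_isUnit_det, Matrix.det_transpose]
  have h1 : (algebraMap ℂ (Matrix (Fin n) (Fin n) ℂ)) z - (X.map Complex.ofReal)ᵀ
      = ((algebraMap ℂ (Matrix (Fin n) (Fin n) ℂ)) z - X.map Complex.ofReal)ᵀ := by
    rw [Matrix.transpose_sub]
    congr 1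
    rw [Algebra.algebraMap_eq_smul_one, Matrix.transpose_smul, Matrix.transpose_one]
  rw [h1, key]

lemma metzler_transpose {n : ℕ} {X : Matrix (Fin n) (Fin n) ℝ} (hM : IsMetzler X) :
    IsMetzler Xᵀ := fun i j h => hM j i (Ne.symm h)

lemma irr_transpose {n : ℕ} {X : Matrix (Fin n) (Fin n) ℝ} (hI : MatIrreducible X) :
    MatIrreducible Xᵀ := by
  intro S hSne hSuniv
  have h1 : Sᶜ.Nonempty := by
    rw [Finset.nonempty_iff_ne_empty]
    intro hcon
    exact hSuniv ((Finset.compl_eq_empty_iff S).mp hcon)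
  have h2 : Sᶜ ≠ Finset.univ := by
    intro hcon
    obtain ⟨x, hx⟩ := hSne
    have : x ∈ Sᶜ := hcon ▸ Finset.mem_univ x
    rw [Finset.mem_compl] at this
    exact this hx
  obtain ⟨i, hi, j, hj, hXij⟩ := hI Sᶜ h1 h2
  rw [Finset.mem_compl] at hi
  rw [Finset.mem_compl, not_not] at hj
  exact ⟨j, hj, i, hi, hXij⟩

lemma quad_neg {n : ℕ} (M : Matrix (Fin n) (Fin n) ℝ) (hsym : Mᵀ = M)
    (hoff : ∀ i j, i ≠ j → 0 ≤ M i j) (v : Fin n → ℝ) (hv : ∀ i, 0 < v i)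
    (hMv : M *ᵥ v = 0) (u : Fin n → ℝ) : u ⬝ᵥ (M *ᵥ u) ≤ 0 := by
  classical
  set s : Fin n → ℝ := fun i => u i / v i with hsdef
  have hu : ∀ i, u i = s i * v i := by
    intro i
    rw [hsdef]
    rw [div_mul_cancel₀ _ (hv i).ne']
  have hMsym : ∀ i j, M i j = M j i := by
    intro i j
    conv_lhs => rw [← hsym]
    rw [Matrix.transpose_apply]
  have hrow : ∀ i, ∑ j, M i j * v j = 0 := by
    intro i
    have := congrFun hMv i
    simpa [Matrix.mulVec, dotProduct] using this
  have hcol : ∀ j, ∑ i, M i j * v i = 0 := by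
    intro j
    rw [← hrow j]
    exact Finset.sum_congr rfl fun i _ => by rw [hMsym i j]
  have hlhs : u ⬝ᵥ (M *ᵥ u) = ∑ i, ∑ j, M i j * u i * u j := by
    simp only [dotProduct, Matrix.mulVec, Finset.mul_sum]
    exact Finset.sum_congr rfl fun i _ => Finset.sum_congr rfl fun j _ => by ring
  have expand : ∀ i j : Fin n, M i j * (v i * v j) * (s i - s j)^2
      = (v i * s i^2) * (M i j * v j) + (v j * s j^2) * (M i j * v i)
        - 2 * (M i j * u i * u j) := by
    intro i j
    rw [hu i, hu j]
    ring
  have key : ∑ i, ∑ j, M i j * (v i * v j) * (s i - s j)^2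
      = -2 * ∑ i, ∑ j, M i j * u i * u j := by
    have e1 : ∑ i, ∑ j, M i j * (v i * v j) * (s i - s j)^2
        = (∑ i, ∑ j, (v i * s i^2) * (M i j * v j))
          + (∑ i, ∑ j, (v j * s j^2) * (M i j * v i))
          - 2 * ∑ i, ∑ j, M i j * u i * u j := by
      rw [Finset.mul_sum, ← Finset.sum_add_distrib, ← Finset.sum_sub_distrib]
      refine Finset.sum_congr rfl fun i _ => ?_
      rw [Finset.mul_sum, ← Finset.sum_add_distrib, ← Finset.sum_sub_distrib]
      exact Finset.sum_congr rfl fun j _ => expand i j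
    have e2 : ∑ i, ∑ j, (v i * s i^2) * (M i j * v j) = 0 := by
      refine Finset.sum_eq_zero fun i _ => ?_
      rw [← Finset.mul_sum, hrow i, mul_zero]
    have e3 : ∑ i : Fin n, ∑ j : Fin n, (v j * s j^2) * (M i j * v i) = 0 := by
      rw [Finset.sum_comm]
      refine Finset.sum_eq_zero fun j _ => ?_
      rw [← Finset.mul_sum, hcol j, mul_zero]
    rw [e1, e2, e3]
    ring
  have hnn : 0 ≤ ∑ i, ∑ j, M i j * (v i * v j) * (s i - s j)^2 := by
    refine Finset.sum_nonneg fun i _ => Finset.sum_nonneg fun j _ => ?_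
    by_cases h : i = j
    · subst h; simp
    · have h1 : 0 ≤ M i j := hoff i j h
      have h2 : 0 < v i * v j := mul_pos (hv i) (hv j)
      positivity
  rw [hlhs]
  linarith [key ▸ hnn]

set_option maxHeartbeats 1000000 in
theorem stmt2 {n : ℕ} (X : Matrix (Fin n) (Fin n) ℝ) (hM : IsMetzler X)
    (hI : MatIrreducible X) (hμ : spectralAbscissa X = 0) :
    ∃ r : Fin n → ℝ, (∀ i, 0 < r i) ∧
      ∀ v : Fin n → ℝ,
        v ⬝ᵥ ((Xᵀ * Matrix.diagonal r + Matrix.diagonal r * X) *ᵥ v) ≤ 0 := by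
  rcases Nat.eq_zero_or_pos n with hn | hn
  · subst hn
    refine ⟨fun _ => 1, fun i => i.elim0, fun v => ?_⟩
    simp [dotProduct]
  · haveI : Nonempty (Fin n) := ⟨⟨0, hn⟩⟩
    have hfin : (matSpec X).Finite := spec_finite _
    have hne : (matSpec X).Nonempty := spectrum.nonempty _
    have himfin : (Complex.re '' matSpec X).Finite := hfin.image _
    have himne : (Complex.re '' matSpec X).Nonempty := hne.image _
    have hub : ∀ z ∈ matSpec X, z.re ≤ 0 := by
      intro z hz
      have h1 := le_csSup himfin.bddAbove (Set.mem_image_of_mem Complex.re hz)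
      rwa [show sSup (Complex.re '' matSpec X) = spectralAbscissa X from rfl, hμ] at h1
    have hzero : ∃ z₀ ∈ matSpec X, z₀.re = 0 := by
      have hmem := himne.csSup_mem himfin
      rw [show sSup (Complex.re '' matSpec X) = spectralAbscissa X from rfl, hμ] at hmem
      obtain ⟨z₀, hz₀, hre⟩ := hmem
      exact ⟨z₀, hz₀, hre⟩
    obtain ⟨v, hv, hXv⟩ := perron hn X hM hI hub hzero
    have hspecT : matSpec Xᵀ = matSpec X := matSpec_transpose X
    obtain ⟨w, hw, hXTw⟩ := perron hn Xᵀ (metzler_transpose hM) (irr_transpose hI)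
      (by rw [hspecT]; exact hub) (by rw [hspecT]; exact hzero)
    set r : Fin n → ℝ := fun i => w i / v i with hrdef
    have hr : ∀ i, 0 < r i := fun i => div_pos (hw i) (hv i)
    refine ⟨r, hr, fun u => ?_⟩
    set M : Matrix (Fin n) (Fin n) ℝ := Xᵀ * Matrix.diagonal r + Matrix.diagonal r * X
      with hMdef
    have hsym : Mᵀ = M := by
      rw [hMdef, Matrix.transpose_add, Matrix.transpose_mul, Matrix.transpose_mul,
        Matrix.diagonal_transpose, Matrix.transpose_transpose, add_comm]
    have hoff : ∀ i j, i ≠ j → 0 ≤ M i j := by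
      intro i j hij
      have h1 : M i j = X j i * r j + r i * X i j := by
        rw [hMdef, Matrix.add_apply, Matrix.mul_diagonal, Matrix.diagonal_mul,
          Matrix.transpose_apply]
      rw [h1]
      have := hM i j hij
      have := hM j i (Ne.symm hij)
      have := (hr i).le
      have := (hr j).le
      positivity
    have hrv : (Matrix.diagonal r) *ᵥ v = w := by
      funext i
      rw [Matrix.mulVec_diagonal]
      exact div_mul_cancel₀ _ (hv i).ne'
    have hMv : M *ᵥ v = 0 := by
      rw [hMdef, Matrix.add_mulVec, ← Matrix.mulVec_mulVec, ← Matrix.mulVec_mulVec,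
        hrv, hXTw, hXv, Matrix.mulVec_zero, add_zero]
    exact quad_neg M hsym hoff v hv hMv u
end

section
/- Let A be a nonnegative irreducible n×n matrix with zero diagonal, B and D positive diagonal matrices, and p* ∈ (0,1)ⁿ a strictly positive equilibrium of ṗ = (AᵀB − D)p − diag(p)AᵀB p. Then the Jacobian at p*, J(p*) = −(I − P*)^{-1}D + (I − P*)AᵀB with P* = diag(p*), satisfies J(p*) p* = −P* AᵀB p* ≪ 0, and consequently J(p*) is Hurwitz. -/
open Matrix Set Filter

lemma metzler_hurwitz {n : ℕ} (X : Matrix (Fin n) (Fin n) ℝ) (hM : IsMetzler X)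
    (p : Fin n → ℝ) (hp : ∀ i, 0 < p i) (hXp : ∀ i, (X *ᵥ p) i < 0) : IsHurwitz X := by
  intro z hz
  rw [matSpec, spectrum.mem_iff] at hz
  have hdet : ((algebraMap ℂ (Matrix (Fin n) (Fin n) ℂ)) z - X.map Complex.ofReal).det = 0 := by
    by_contra h
    exact hz ((Matrix.isUnit_iff_isUnit_det _).mpr (isUnit_iff_ne_zero.mpr h))
  obtain ⟨v, hv0, hv⟩ := Matrix.exists_mulVec_eq_zero_iff.mpr hdet
  have heig : ∀ i, z * v i = ∑ j, (X i j : ℂ) * v j := by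
    intro i
    have := congrFun hv i
    rw [Algebra.algebraMap_eq_smul_one, Matrix.sub_mulVec, Matrix.smul_mulVec,
      Matrix.one_mulVec] at this
    have h2 : z * v i - ∑ j, (X i j : ℂ) * v j = 0 := this
    linear_combination h2
  obtain ⟨i1, hi1⟩ : ∃ i, v i ≠ 0 := Function.ne_iff.mp hv0
  obtain ⟨i0, -, hi0⟩ := Finset.exists_max_image Finset.univ
    (fun i => ‖v i‖ / p i) ⟨i1, Finset.mem_univ i1⟩
  set c : ℝ := ‖v i0‖ / p i0 with hc
  have hcpos : 0 < c := lt_of_lt_of_le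
    (div_pos (by simpa using hi1) (hp i1)) (hi0 i1 (Finset.mem_univ i1))
  have hbound : ∀ j, ‖v j‖ ≤ c * p j := by
    intro j
    have := hi0 j (Finset.mem_univ j)
    calc ‖v j‖ = ‖v j‖ / p j * p j := by
          field_simp [(hp j).ne']
      _ ≤ c * p j := by
          exact mul_le_mul_of_nonneg_right this (hp j).le
  have hvi0 : ‖v i0‖ = c * p i0 := by
    rw [hc]; field_simp [(hp i0).ne']
  have hvi0pos : 0 < ‖v i0‖ := by
    rw [hvi0]; exact mul_pos hcpos (hp i0)
  -- key: (z - X i0 i0) * v i0 = ∑ over j ≠ i0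
  have hkey : (z - (X i0 i0 : ℂ)) * v i0 = ∑ j ∈ Finset.univ.erase i0, (X i0 j : ℂ) * v j := by
    have := heig i0
    rw [← Finset.add_sum_erase Finset.univ _ (Finset.mem_univ i0)] at this
    linear_combination this
  have hsum : ∑ j ∈ Finset.univ.erase i0, X i0 j * p j < -(X i0 i0 * p i0) := by
    have h := hXp i0
    rw [Matrix.mulVec, dotProduct,
      ← Finset.add_sum_erase Finset.univ _ (Finset.mem_univ i0)] at h
    linarith
  have habs : ‖z - (X i0 i0 : ℂ)‖ * ‖v i0‖
      ≤ c * ∑ j ∈ Finset.univ.erase i0, X i0 j * p j := by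
    rw [← norm_mul, hkey]
    calc ‖∑ j ∈ Finset.univ.erase i0, (X i0 j : ℂ) * v j‖
        ≤ ∑ j ∈ Finset.univ.erase i0, ‖(X i0 j : ℂ) * v j‖ :=
          norm_sum_le _ _
      _ ≤ ∑ j ∈ Finset.univ.erase i0, X i0 j * (c * p j) := by
          apply Finset.sum_le_sum
          intro j hj
          rw [norm_mul, Complex.norm_real,
            Real.norm_of_nonneg (hM i0 j (Finset.ne_of_mem_erase hj).symm)]
          exact mul_le_mul_of_nonneg_left (hbound j) (hM i0 j (Finset.ne_of_mem_erase hj).symm)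
      _ = c * ∑ j ∈ Finset.univ.erase i0, X i0 j * p j := by
          rw [Finset.mul_sum]; apply Finset.sum_congr rfl; intro j _; ring
  have hlt : ‖z - (X i0 i0 : ℂ)‖ < -(X i0 i0) := by
    have h2 : c * ∑ j ∈ Finset.univ.erase i0, X i0 j * p j < c * -(X i0 i0 * p i0) :=
      (mul_lt_mul_iff_right₀ hcpos).mpr hsum
    have h3 : ‖z - (X i0 i0 : ℂ)‖ * ‖v i0‖
        < -(X i0 i0) * ‖v i0‖ := by
      refine habs.trans_lt ?_
      rw [hvi0]
      have he : -(X i0 i0) * (c * p i0) = c * -(X i0 i0 * p i0) := by ring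
      linarith
    exact lt_of_mul_lt_mul_right h3 (norm_nonneg _)
  have := (Complex.re_le_norm (z - (X i0 i0 : ℂ))).trans_lt hlt
  rw [Complex.sub_re, Complex.ofReal_re] at this
  linarith

theorem stmt11' {n : ℕ} (A : Matrix (Fin n) (Fin n) ℝ) (hA : ∀ i j, 0 ≤ A i j)
    (hAdiag : ∀ i, A i i = 0) (hAirr : MatIrreducible A)
    (β δ : Fin n → ℝ) (hβ : ∀ i, 0 < β i) (hδ : ∀ i, 0 < δ i)
    (p : Fin n → ℝ) (hp : ∀ i, 0 < p i ∧ p i < 1)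
    (heq : (Aᵀ * Matrix.diagonal β - Matrix.diagonal δ) *ᵥ p -
      Matrix.diagonal p *ᵥ ((Aᵀ * Matrix.diagonal β) *ᵥ p) = 0)
    (J : Matrix (Fin n) (Fin n) ℝ)
    (hJ : J = -(1 - Matrix.diagonal p)⁻¹ * Matrix.diagonal δ +
      (1 - Matrix.diagonal p) * (Aᵀ * Matrix.diagonal β)) :
    J *ᵥ p = -(Matrix.diagonal p *ᵥ ((Aᵀ * Matrix.diagonal β) *ᵥ p)) ∧
      (∀ i, (J *ᵥ p) i < 0) ∧ IsHurwitz J := by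
  set M := Aᵀ * Matrix.diagonal β with hM
  have hq : ∀ i, 0 < 1 - p i := fun i => by linarith [(hp i).2]
  -- inverse of (1 - diagonal p)
  have hQdiag : (1 : Matrix (Fin n) (Fin n) ℝ) - Matrix.diagonal p
      = Matrix.diagonal (fun i => 1 - p i) := by
    rw [← Matrix.diagonal_one, Matrix.diagonal_sub]
  have hQinv : ((1 : Matrix (Fin n) (Fin n) ℝ) - Matrix.diagonal p)⁻¹
      = Matrix.diagonal (fun i => (1 - p i)⁻¹) := by
    rw [hQdiag]
    apply Matrix.inv_eq_left_inv
    rw [Matrix.diagonal_mul_diagonal]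
    convert Matrix.diagonal_one
    exact inv_mul_cancel₀ (hq _).ne'
  -- entrywise equilibrium
  have heq' : ∀ i, (1 - p i) * (M *ᵥ p) i = δ i * p i := by
    intro i
    have := congrFun heq i
    simp only [Pi.sub_apply, Pi.zero_apply, Matrix.sub_mulVec, Matrix.mulVec_diagonal] at this
    ring_nf
    ring_nf at this
    linarith
  have hMp : ∀ i, 0 < (M *ᵥ p) i := by
    intro i
    have h := heq' i
    have : 0 < δ i * p i := mul_pos (hδ i) (hp i).1
    nlinarith [hq i]
  -- compute J *ᵥ p entrywise
  have hJp : ∀ i, (J *ᵥ p) i = -(p i * (M *ᵥ p) i) := by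
    intro i
    rw [hJ, hQinv, hQdiag, Matrix.add_mulVec, Matrix.neg_mul, Matrix.neg_mulVec,
      ← Matrix.mulVec_mulVec, ← Matrix.mulVec_mulVec]
    have h := heq' i
    have h2 : (1 - p i)⁻¹ * (δ i * p i) = (M *ᵥ p) i := by
      rw [← h, inv_mul_cancel_left₀ (hq i).ne']
    simp only [Pi.add_apply, Pi.neg_apply, Matrix.mulVec_diagonal]
    rw [h2]
    ring
  have hfirst : J *ᵥ p = -(Matrix.diagonal p *ᵥ (M *ᵥ p)) := by
    funext i
    rw [hJp i, Pi.neg_apply, Matrix.mulVec_diagonal]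
  have hneg : ∀ i, (J *ᵥ p) i < 0 := by
    intro i
    rw [hJp i]
    exact neg_lt_zero.mpr (mul_pos (hp i).1 (hMp i))
  refine ⟨hfirst, hneg, ?_⟩
  -- J is Metzler
  have hMetz : IsMetzler J := by
    intro i j hij
    rw [hJ, hQinv, hQdiag]
    simp only [Matrix.add_apply, Matrix.neg_mul, Matrix.neg_apply,
      Matrix.diagonal_mul_diagonal, Matrix.diagonal_apply_ne _ hij, neg_zero,
      Matrix.diagonal_mul, zero_add]
    exact mul_nonneg (hq i).le (by
      rw [hM, Matrix.mul_apply]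
      apply Finset.sum_nonneg
      intro k _
      by_cases hk : k = j
      · subst hk
        simp only [Matrix.diagonal_apply_eq, Matrix.transpose_apply]
        exact mul_nonneg (hA _ _) (hβ k).le
      · simp [Matrix.diagonal_apply_ne _ hk])
  exact metzler_hurwitz J hMetz p (fun i => (hp i).1) hneg

theorem stmt11 {n : ℕ} (A : Matrix (Fin n) (Fin n) ℝ) (hA : ∀ i j, 0 ≤ A i j)
    (hAdiag : ∀ i, A i i = 0) (hAirr : MatIrreducible A)
    (β δ : Fin n → ℝ) (hβ : ∀ i, 0 < β i) (hδ : ∀ i, 0 < δ i)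
    (p : Fin n → ℝ) (hp : ∀ i, 0 < p i ∧ p i < 1)
    (heq : (Aᵀ * Matrix.diagonal β - Matrix.diagonal δ) *ᵥ p -
      Matrix.diagonal p *ᵥ ((Aᵀ * Matrix.diagonal β) *ᵥ p) = 0)
    (J : Matrix (Fin n) (Fin n) ℝ)
    (hJ : J = -(1 - Matrix.diagonal p)⁻¹ * Matrix.diagonal δ +
      (1 - Matrix.diagonal p) * (Aᵀ * Matrix.diagonal β)) :
    J *ᵥ p = -(Matrix.diagonal p *ᵥ ((Aᵀ * Matrix.diagonal β) *ᵥ p)) ∧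
      (∀ i, (J *ᵥ p) i < 0) ∧ IsHurwitz J := by
  exact stmt11' A hA hAdiag hAirr β δ hβ hδ p hp heq J hJ
end
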